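/- arXiv:1709.08910 — 4 statements merged into one kernel-verified Lean document; each statement's English description precedes it below -/
import Mathlib

section
/- Let D ⊆ Ω_m^k with n nodes and indicator coefficients b_α, let λ be a measure on ℂ^k with finite moments, and let S ⊆ {z^α : α ∈ ℤ_m^k} be a monomial set with invertible evaluation matrix X_{D,S}. Define A = { z^α : α ∈ ℤ_{≥0}^k, ∫ z^α dλ = (m^k/n) b_{\bar α} }. Then the unique weight vector w_S making the cubature rule exact on Span(S) equals the constant vector (1/n,...,1/n) if and only if S ⊆ A. -/
open MeasureTheory Matrix

/-- The monomial `z^α = ∏ i, z i ^ α i` as a function on `ℂ^k`. -/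
noncomputable def mono {k : ℕ} (a : Fin k → ℕ) (z : Fin k → ℂ) : ℂ := ∏ i, z i ^ a i

/-- the interpolatory cubature rule has all weights equal to `1/n`
if and only if every monomial of `S` belongs to
`A = { z^α : ∫ z^α dλ = (m^k/n) b_{\bar α} }`. -/
theorem equal_weights_iff_subset_A {k n : ℕ} (m : ℕ) (hm : 0 < m) (hn : 0 < n)
    (d : Fin n → (Fin k → ℂ)) (hdinj : Function.Injective d)
    (hd : ∀ i l, d i l ^ m = 1)
    (b : (Fin k → ℕ) → ℂ)
    (hb : ∀ β : Fin k → ℕ,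
      b β = (1 / (m : ℂ) ^ k) * ∑ i, mono (fun l => (m - β l % m) % m) (d i))
    (S : Fin n → (Fin k → ℕ)) (hSm : ∀ j l, S j l < m)
    (lam : Measure (Fin k → ℂ))
    (hint : ∀ j, Integrable (fun z => mono (S j) z) lam)
    (X : Matrix (Fin n) (Fin n) ℂ)
    (hX : X = Matrix.of fun i j => mono (S j) (d i))
    (hinv : IsUnit X.det) :
    (X.transpose⁻¹ *ᵥ (fun j => ∫ z, mono (S j) z ∂lam)) = (fun _ => 1 / (n : ℂ)) ↔
      ∀ j, ∫ z, mono (S j) z ∂lam =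
        ((m : ℂ) ^ k / (n : ℂ)) * b (fun l => (m - S j l % m) % m) := by

  have hXt : IsUnit X.transpose.det := by rwa [Matrix.det_transpose]
  set v : Fin n → ℂ := fun j => ∫ z, mono (S j) z ∂lam with hv
  have key : (X.transpose⁻¹ *ᵥ v) = (fun _ => 1 / (n : ℂ)) ↔
      v = X.transpose *ᵥ (fun _ => 1 / (n : ℂ)) := by
    constructor
    · intro h
      rw [← h, Matrix.mulVec_mulVec, Matrix.mul_nonsing_inv _ hXt, Matrix.one_mulVec]
    · intro h
      rw [h, Matrix.mulVec_mulVec, Matrix.nonsing_inv_mul _ hXt, Matrix.one_mulVec]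
  rw [key, funext_iff]
  apply forall_congr'
  intro j
  have hexp : ∀ l : Fin k, (m - ((m - S j l % m) % m) % m) % m = S j l := by
    intro l
    have hlt := hSm j l
    have h1 : S j l % m = S j l := Nat.mod_eq_of_lt hlt
    rcases Nat.eq_zero_or_pos (S j l) with h0 | hpos
    · simp [h0, Nat.mod_self]
    · have h2 : (m - S j l) % m = m - S j l := Nat.mod_eq_of_lt (by omega)
      rw [h1, h2, h2]
      have : m - (m - S j l) = S j l := by omega
      rw [this, h1]
  have hbval : b (fun l => (m - S j l % m) % m)
      = (1 / (m : ℂ) ^ k) * ∑ i, mono (S j) (d i) := by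
    rw [hb]
    congr 1
    apply Finset.sum_congr rfl
    intro i _
    unfold mono
    apply Finset.prod_congr rfl
    intro l _
    exact congrArg (d i l ^ ·) (hexp l)
  have hmk : ((m : ℂ)) ^ k ≠ 0 :=
    pow_ne_zero _ (Nat.cast_ne_zero.mpr hm.ne')
  have hrhs : ((m : ℂ) ^ k / (n : ℂ)) * b (fun l => (m - S j l % m) % m)
      = (∑ i, mono (S j) (d i)) * (1 / (n : ℂ)) := by
    rw [hbval, show ((m : ℂ) ^ k / (n : ℂ)) * ((1 / (m : ℂ) ^ k) * ∑ i, mono (S j) (d i))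
      = ((m : ℂ) ^ k * ((m : ℂ) ^ k)⁻¹) * ((∑ i, mono (S j) (d i)) * (1 / (n : ℂ))) from by ring,
      mul_inv_cancel₀ hmk, one_mul]
  rw [hrhs]
  have : (X.transpose *ᵥ (fun _ => 1 / (n : ℂ))) j
      = (∑ i, mono (S j) (d i)) * (1 / (n : ℂ)) := by
    simp only [Matrix.mulVec, dotProduct, Matrix.transpose_apply, hX,
      Matrix.of_apply, Finset.sum_mul]
  rw [this]
end

section
/- Let ν be a zero-mean complex Gaussian measure on ℂ^k, so ∫ z^α dν = 0 for α ≠ 0 and ∫ 1 dν = 1. Let D ⊆ Ω_m^k with n nodes, indicator function f with support Supp(f) = {z^α : α ∈ ℤ_m^k, b_α ≠ 0}, and let S ⊆ {z^α : α ∈ ℤ_m^k} be a monomial set containing 1 with invertible evaluation matrix X_{D,S}. Then the weights w_S are all equal to 1/n if and only if S ∩ Supp(f) = {1}. -/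
open MeasureTheory Matrix

lemma root_abs_one (z : ℂ) (m : ℕ) (hm : 0 < m) (h : z ^ m = 1) : ‖z‖ = 1 := by
  have h1 : ‖z‖ ^ m = 1 := by rw [← norm_pow, h]; simp
  rcases lt_trichotomy (‖z‖) 1 with hlt | heq | hgt
  · have := pow_lt_one₀ (norm_nonneg z) hlt hm.ne'
    simp [h1] at this
  · exact heq
  · have := one_lt_pow₀ hgt hm.ne'
    simp [h1] at this

lemma pow_mod_star (z : ℂ) (m s : ℕ) (hm : 0 < m) (hz : z ^ m = 1) (hs : s < m) :
    z ^ ((m - s) % m) = star (z ^ s) := by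
  have hz0 : z ≠ 0 := by
    intro h
    rw [h, zero_pow hm.ne'] at hz
    exact one_ne_zero hz.symm
  have habs : ‖z‖ = 1 := root_abs_one z m hm hz
  have hst : star z * z = 1 := by
    have : (starRingEnd ℂ) z * z = (Complex.normSq z : ℂ) := by
      rw [mul_comm, Complex.mul_conj]
    rw [Complex.star_def, this, Complex.normSq_eq_norm_sq, habs]
    norm_num
  have h2 : star (z ^ s) * z ^ s = 1 := by
    rw [star_pow, ← mul_pow, hst, one_pow]
  rcases Nat.eq_zero_or_pos s with rfl | hspos
  · simp [Nat.mod_self]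
  · have hlt : m - s < m := Nat.sub_lt hm hspos
    have h1 : z ^ ((m - s) % m) * z ^ s = 1 := by
      rw [Nat.mod_eq_of_lt hlt, ← pow_add, Nat.sub_add_cancel hs.le, hz]
    exact mul_right_cancel₀ (pow_ne_zero s hz0) (h1.trans h2.symm)

/-- for a Gaussian-type measure `ν` (`∫ z^α dν = 0` for `α ≠ 0`,
`∫ 1 dν = 1`), the cubature weights are all equal to `1/n` if and only if
`S ∩ Supp(f) = {1}`, i.e. the only exponent of `S` at which the indicator
coefficient is nonzero is `0`. -/
theorem gaussian_equal_weights_iff_support {k n : ℕ} (m : ℕ) (hm : 0 < m) (hn : 0 < n)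
    (d : Fin n → (Fin k → ℂ)) (hdinj : Function.Injective d)
    (hd : ∀ i l, d i l ^ m = 1)
    (b : (Fin k → ℕ) → ℂ)
    (hb : ∀ β : Fin k → ℕ,
      b β = (1 / (m : ℂ) ^ k) * ∑ i, mono (fun l => (m - β l % m) % m) (d i))
    (S : Fin n → (Fin k → ℕ)) (hSm : ∀ j l, S j l < m)
    (j0 : Fin n) (hj0 : S j0 = 0)
    (ν : Measure (Fin k → ℂ))
    (hint : ∀ j, Integrable (fun z => mono (S j) z) ν)
    (hν0 : ∀ α : Fin k → ℕ, α ≠ 0 → ∫ z, mono α z ∂ν = 0)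
    (hν1 : ∫ z, mono (0 : Fin k → ℕ) z ∂ν = 1)
    (X : Matrix (Fin n) (Fin n) ℂ)
    (hX : X = Matrix.of fun i j => mono (S j) (d i))
    (hinv : IsUnit X.det) :
    (X.transpose⁻¹ *ᵥ (fun j => ∫ z, mono (S j) z ∂ν)) = (fun _ => 1 / (n : ℂ)) ↔
      ∀ j, b (S j) ≠ 0 → S j = 0 := by
  -- S is injective (else two columns of X coincide)
  have hSinj : Function.Injective S := by
    intro j j' h
    by_contra hne
    have : X.det = 0 := by
      apply Matrix.det_zero_of_column_eq hne
      intro i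
      simp [hX, h]
    rw [this] at hinv
    exact hinv.ne_zero rfl
  -- the integral vector is the standard basis vector at j0
  have hv : ∀ j, (∫ z, mono (S j) z ∂ν) = if j = j0 then 1 else 0 := by
    intro j
    by_cases h : j = j0
    · simp [h, hj0, hν1]
    · rw [if_neg h]
      apply hν0
      intro h0
      exact h (hSinj (h0.trans hj0.symm))
  -- determinant of the transpose is a unit
  have hdet : IsUnit X.transpose.det := by rwa [Matrix.det_transpose]
  -- b (S j) vanishes iff the column sum vanishes
  have hbsum : ∀ j, (b (S j) ≠ 0 ↔ (∑ i, mono (S j) (d i)) ≠ 0) := by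
    intro j
    have hstar : ∀ i, mono (fun l => (m - S j l % m) % m) (d i) = star (mono (S j) (d i)) := by
      intro i
      unfold mono
      rw [star_prod]
      apply Finset.prod_congr rfl
      intro l _
      show d i l ^ ((m - S j l % m) % m) = star (d i l ^ S j l)
      rw [Nat.mod_eq_of_lt (hSm j l)]
      exact pow_mod_star (d i l) m (S j l) hm (hd i l) (hSm j l)
    have hbs : b (S j) = (1 / (m : ℂ) ^ k) * star (∑ i, mono (S j) (d i)) := by
      rw [hb, star_sum]
      congr 1
      exact Finset.sum_congr rfl fun i _ => hstar i
    rw [hbs]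
    have hm0 : (1 / (m : ℂ) ^ k) ≠ 0 :=
      one_div_ne_zero (pow_ne_zero _ (by exact_mod_cast hm.ne'))
    constructor
    · intro h hsum
      exact h (by rw [hsum, star_zero, mul_zero])
    · intro h hmul
      rcases mul_eq_zero.mp hmul with h1 | h1
      · exact hm0 h1
      · exact h (star_eq_zero.mp h1)
  -- rewrite the left-hand side as a linear system
  have hiff : (X.transpose⁻¹ *ᵥ (fun j => ∫ z, mono (S j) z ∂ν)) = (fun _ => 1 / (n : ℂ)) ↔
      X.transpose *ᵥ (fun _ => 1 / (n : ℂ)) = (fun j => ∫ z, mono (S j) z ∂ν) := by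
    constructor
    · intro h
      rw [← h, Matrix.mulVec_mulVec, Matrix.mul_nonsing_inv _ hdet, Matrix.one_mulVec]
    · intro h
      rw [← h, Matrix.mulVec_mulVec, Matrix.nonsing_inv_mul _ hdet, Matrix.one_mulVec]
  rw [hiff]
  have hentry : ∀ j, (X.transpose *ᵥ (fun _ => 1 / (n : ℂ))) j
      = (∑ i, mono (S j) (d i)) * (1 / (n : ℂ)) := by
    intro j
    simp [Matrix.mulVec, dotProduct, hX, Finset.sum_mul]
  have hnn : (n : ℂ) ≠ 0 := by exact_mod_cast hn.ne'
  constructor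
  · intro h j hbj
    have hsum : (∑ i, mono (S j) (d i)) ≠ 0 := (hbsum j).mp hbj
    by_contra hS0
    have hj : j ≠ j0 := fun hjj => hS0 (hjj ▸ hj0)
    have := congrFun h j
    rw [hentry j, hv j, if_neg hj] at this
    rcases mul_eq_zero.mp this with h1 | h1
    · exact hsum h1
    · rw [one_div, inv_eq_zero] at h1
      exact hnn h1
  · intro h
    funext j
    rw [hentry j, hv j]
    by_cases hj : j = j0
    · rw [if_pos hj, hj, hj0]
      have : ∀ i, mono (0 : Fin k → ℕ) (d i) = 1 := by intro i; simp [mono]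
      simp only [this, Finset.sum_const, Finset.card_univ, Fintype.card_fin, nsmul_eq_mul,
        mul_one]
      field_simp
    · rw [if_neg hj]
      by_cases hsum : (∑ i, mono (S j) (d i)) = 0
      · rw [hsum, zero_mul]
      · have hS0 : S j = 0 := h j ((hbsum j).mpr hsum)
        exact absurd (hSinj (hS0.trans hj0.symm)) hj
end

section
/- Under the Gaussian measure ν (∫ z^α dν = 0 for α ≠ 0, ∫1 dν = 1), if D ⊆ Ω_m^k with n nodes admits equal weights w = (1/n,...,1/n) for some correct monomial basis S, then the precision basis of (D, w) is {1} ∪ { z^α : α ∈ ℤ_{≥0}^k \ {0}, z^{[α]_m} ∉ Supp(f) }, where f is the indicator function of D. -/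
open MeasureTheory Matrix

/-- for a Gaussian-type measure `ν`, if a correct monomial basis `S`
yields equal weights `1/n`, then the precision basis of `(D, (1/n,...,1/n))` is
`{1} ∪ { z^α : α ≠ 0, z^{[α]_m} ∉ Supp(f) }`. -/
theorem gaussian_precision_basis {k n : ℕ} (m : ℕ) (hm : 0 < m) (hn : 0 < n)
    (d : Fin n → (Fin k → ℂ)) (hdinj : Function.Injective d)
    (hd : ∀ i l, d i l ^ m = 1)
    (b : (Fin k → ℕ) → ℂ)
    (hb : ∀ β : Fin k → ℕ,
      b β = (1 / (m : ℂ) ^ k) * ∑ i, mono (fun l => (m - β l % m) % m) (d i))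
    (S : Fin n → (Fin k → ℕ)) (hSm : ∀ j l, S j l < m)
    (ν : Measure (Fin k → ℂ))
    (hint : ∀ j, Integrable (fun z => mono (S j) z) ν)
    (hν0 : ∀ α : Fin k → ℕ, α ≠ 0 → ∫ z, mono α z ∂ν = 0)
    (hν1 : ∫ z, mono (0 : Fin k → ℕ) z ∂ν = 1)
    (X : Matrix (Fin n) (Fin n) ℂ)
    (hX : X = Matrix.of fun i j => mono (S j) (d i))
    (hinv : IsUnit X.det)
    (hw : (X.transpose⁻¹ *ᵥ (fun j => ∫ z, mono (S j) z ∂ν)) = (fun _ => 1 / (n : ℂ))) :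
    ∀ α : Fin k → ℕ,
      (∫ z, mono α z ∂ν = (1 / (n : ℂ)) * ∑ i, mono α (d i)) ↔
      (α = 0 ∨ b (fun l => α l % m) = 0) := by
  intro α
  have hmC : ((m : ℂ)) ^ k ≠ 0 := pow_ne_zero _ (Nat.cast_ne_zero.mpr hm.ne')
  have hnC : (n : ℂ) ≠ 0 := Nat.cast_ne_zero.mpr hn.ne'
  set αm : Fin k → ℕ := fun l => α l % m with hαmdef
  set αb : Fin k → ℕ := fun l => (m - α l % m) % m with hαbdef
  have hαmlt : ∀ l, αm l < m := fun l => Nat.mod_lt _ hm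
  have hαblt : ∀ l, αb l < m := fun l => Nat.mod_lt _ hm
  have hcase : ∀ l, (αm l = 0 ∧ αb l = 0) ∨ (0 < αm l ∧ αb l = m - αm l) := by
    intro l
    rcases Nat.eq_zero_or_pos (αm l) with h | h
    · left
      refine ⟨h, ?_⟩
      simp only [hαbdef]
      have : α l % m = 0 := h
      rw [this, Nat.sub_zero, Nat.mod_self]
    · right
      refine ⟨h, ?_⟩
      simp only [hαbdef]
      have h2 : α l % m < m := hαmlt l
      have h' : 0 < α l % m := h
      have h3 : m - α l % m < m := by omega
      rw [Nat.mod_eq_of_lt h3]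
  -- reduce exponents mod m
  have hmod : ∀ (β : Fin k → ℕ) i, mono β (d i) = mono (fun l => β l % m) (d i) := by
    intro β i
    unfold mono
    refine Finset.prod_congr rfl fun l _ => ?_
    conv_lhs => rw [← Nat.div_add_mod (β l) m]
    rw [pow_add, pow_mul, hd, one_pow, one_mul]
  have hsum_mod : ∑ i, mono α (d i) = ∑ i, mono αm (d i) :=
    Finset.sum_congr rfl fun i _ => hmod α i
  -- b αm in terms of sum over αb
  have hb_αm : b αm = (1 / (m : ℂ) ^ k) * ∑ i, mono αb (d i) := by
    rw [hb]
    congr 1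
    refine Finset.sum_congr rfl fun i _ => ?_
    congr 1
    funext l
    simp only [hαbdef]
    rw [Nat.mod_eq_of_lt (hαmlt l)]
  -- abs of nodes is 1
  have habs : ∀ i l, ‖d i l‖ = 1 := by
    intro i l
    have h1 : ‖d i l‖ ^ m = 1 := by
      rw [← norm_pow, hd]; simp
    have h0 : (0:ℝ) ≤ ‖d i l‖ := norm_nonneg _
    rcases lt_trichotomy (‖d i l‖) 1 with h | h | h
    · have := pow_lt_one₀ h0 h hm.ne'
      linarith
    · exact h
    · have := one_lt_pow₀ h hm.ne'
      linarith
  -- conjugation relation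
  have hconj : ∑ i, mono αb (d i) = (starRingEnd ℂ) (∑ i, mono αm (d i)) := by
    rw [map_sum]
    refine Finset.sum_congr rfl fun i _ => ?_
    unfold mono
    rw [map_prod]
    refine Finset.prod_congr rfl fun l _ => ?_
    have hmul : d i l ^ αb l * d i l ^ αm l = 1 := by
      rw [← pow_add]
      rcases hcase l with ⟨h1, h2⟩ | ⟨h1, h2⟩
      · rw [h1, h2]; norm_num
      · have : αb l + αm l = m := by have := hαmlt l; omega
        rw [this, hd]
    have habs' : ‖d i l ^ αm l‖ = 1 := by
      rw [norm_pow, habs, one_pow]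
    rw [← Complex.inv_eq_conj habs']
    exact eq_inv_of_mul_eq_one_left hmul
  rcases eq_or_ne α 0 with rfl | hα
  · constructor
    · intro _; exact Or.inl rfl
    · intro _
      rw [hν1]
      have : ∀ i : Fin n, mono (0 : Fin k → ℕ) (d i) = 1 := by
        intro i; unfold mono; simp
      rw [Finset.sum_congr rfl fun i _ => this i]
      simp
      field_simp
  · rw [hν0 α hα]
    constructor
    · intro h
      right
      have hs : ∑ i, mono αm (d i) = 0 := by
        rw [← hsum_mod]
        have := h.symm
        rcases mul_eq_zero.mp (by rw [this]) with h1 | h1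
        · exact absurd h1 (by simpa using hnC)
        · exact h1
      rw [hb_αm, hconj, hs, map_zero, mul_zero]
    · rintro (h | h)
      · exact absurd h hα
      · have h1 : ∑ i, mono αb (d i) = 0 := by
          rw [hb_αm] at h
          rcases mul_eq_zero.mp h with h2 | h2
          · exact absurd h2 (by simpa using hmC)
          · exact h2
        have h2 : ∑ i, mono αm (d i) = 0 := by
          apply (starRingEnd ℂ).injective
          rw [map_zero, ← hconj, h1]
        rw [hsum_mod, h2, mul_zero]
end

section
/- Suppose D ⊆ Ω_m^k with n nodes is a 'regular fraction' in the sense that for every monomial z^α with α ∈ ℤ_m^k, the evaluation vector [z^α(d)]_{d∈D} is either a scalar multiple of the all-ones vector 1_n or orthogonal to 1_n. Let ν be a Gaussian measure (∫ z^α dν = 0 for α ≠ 0, ∫1 dν = 1). Then for every monomial basis S containing 1 with invertible evaluation matrix X_{D,S}, the cubature weights w_S = (X_{D,S}ᵗ)⁻¹[∫ s dν]_{s∈S} are all equal to 1/n. -/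
open MeasureTheory Matrix

/-- if `D ⊆ Ω_m^k` is a regular fraction (every monomial evaluation
vector is either a multiple of the all-ones vector or orthogonal to it), then for a
Gaussian-type measure `ν` every correct monomial basis `S` containing `1` yields
equal weights `1/n`. -/
theorem regular_fraction_equal_weights {k n : ℕ} (m : ℕ) (hm : 0 < m) (hn : 0 < n)
    (d : Fin n → (Fin k → ℂ)) (hdinj : Function.Injective d)
    (hd : ∀ i l, d i l ^ m = 1)
    (hreg : ∀ a : Fin k → ℕ, (∀ l, a l < m) →
      (∃ γ : ℂ, ∀ i, mono a (d i) = γ) ∨ (∑ i, mono a (d i) = 0))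
    (S : Fin n → (Fin k → ℕ)) (hSm : ∀ j l, S j l < m)
    (j0 : Fin n) (hj0 : S j0 = 0)
    (ν : Measure (Fin k → ℂ))
    (hint : ∀ j, Integrable (fun z => mono (S j) z) ν)
    (hν0 : ∀ α : Fin k → ℕ, α ≠ 0 → ∫ z, mono α z ∂ν = 0)
    (hν1 : ∫ z, mono (0 : Fin k → ℕ) z ∂ν = 1)
    (X : Matrix (Fin n) (Fin n) ℂ)
    (hX : X = Matrix.of fun i j => mono (S j) (d i))
    (hinv : IsUnit X.det) :
    (X.transpose⁻¹ *ᵥ (fun j => ∫ z, mono (S j) z ∂ν)) = (fun _ => 1 / (n : ℂ)) := by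
  have hone : ∀ i, mono (S j0) (d i) = 1 := by
    intro i; simp [mono, hj0]
  -- no column other than j0 can be constant, else det = 0
  have hcol : ∀ j, j ≠ j0 → ¬ (∃ γ : ℂ, ∀ i, mono (S j) (d i) = γ) := by
    rintro j hj ⟨γ, hγ⟩
    have hdet : X.det = 0 := by
      rw [← Matrix.exists_mulVec_eq_zero_iff]
      refine ⟨fun j' => if j' = j then 1 else if j' = j0 then -γ else 0, ?_, ?_⟩
      · intro h
        have := congrFun h j
        simp at this
      · funext i
        have hXij : ∀ j', X i j' = mono (S j') (d i) := by
          intro j'; rw [hX]; rfl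
        simp only [Matrix.mulVec, dotProduct]
        rw [Finset.sum_eq_add_of_mem j j0 (Finset.mem_univ _) (Finset.mem_univ _) hj
          (by intro c _ hc; simp [hc.1, hc.2])]
        simp [hj, hXij, hγ, hone, Ne.symm hj]
    exact hinv.ne_zero hdet
  have hdetne : X.det ≠ 0 := hinv.ne_zero
  -- column sums
  have hsum : ∀ j, (∑ i, mono (S j) (d i)) = if j = j0 then (n : ℂ) else 0 := by
    intro j
    by_cases hj : j = j0
    · subst hj; simp [hone]
    · simp only [hj, if_false]
      rcases hreg (S j) (hSm j) with h | h
      · exact absurd h (hcol j hj)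
      · exact h
  -- integrals
  have hv : ∀ j, (∫ z, mono (S j) z ∂ν) = if j = j0 then 1 else 0 := by
    intro j
    by_cases hj : j = j0
    · subst hj; rw [hj0]; simp [hν1]
    · simp only [hj, if_false]
      apply hν0
      intro h0
      exact hcol j hj ⟨1, fun i => by simp [mono, h0]⟩
  have hnne : (n : ℂ) ≠ 0 := Nat.cast_ne_zero.mpr hn.ne'
  -- Xᵀ *ᵥ (1/n) = v
  have hXu : X.transpose *ᵥ (fun _ => 1 / (n : ℂ)) = (fun j => ∫ z, mono (S j) z ∂ν) := by
    funext j
    simp only [Matrix.mulVec, dotProduct, Matrix.transpose_apply, hv]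
    rw [← Finset.sum_mul]
    have : (∑ i, X i j) = ∑ i, mono (S j) (d i) := by
      apply Finset.sum_congr rfl; intro i _; rw [hX]; rfl
    rw [this, hsum]
    by_cases hj : j = j0 <;> simp [hj] <;> field_simp
  have hdetT : IsUnit X.transpose.det := by rwa [Matrix.det_transpose]
  rw [← hXu, Matrix.mulVec_mulVec, Matrix.nonsing_inv_mul _ hdetT, Matrix.one_mulVec]
end
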